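/- arXiv:0708.2866 — 2 statements merged into one kernel-verified Lean document; each statement's English description precedes it below -/
import Mathlib

section
/- Let T be a triangulated category, S a full triangulated subcategory closed under arbitrary direct sums (a localizing subcategory), and X an object of T. Suppose L0 ∈ S and a morphism f : L0 → X are given such that for every object R in a class 𝓡 of objects of S, composition with f induces an isomorphism Hom(R, L0) → Hom(R, X). If S is the smallest localizing subcategory containing 𝓡, then for every object S' ∈ S, composition with f induces an isomorphism Hom(S', L0) → Hom(S', X). -/
open CategoryTheory Category Limits Pretriangulated

universe w v u

/-- A localizing class of objects in a triangulated category with arbitrary direct sums: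
a (strictly full) class closed under isomorphisms, shifts, triangles and
arbitrary direct sums. -/
def IsLocalizingClass (T : Type u) [Category.{v} T] [Preadditive T] [HasZeroObject T]
    [HasShift T ℤ] [∀ n : ℤ, (shiftFunctor T n).Additive] [Pretriangulated T]
    [HasCoproducts.{v} T] (S : Set T) : Prop :=
  (∀ ⦃X Y : T⦄, (X ≅ Y) → X ∈ S → Y ∈ S) ∧
  (∀ X ∈ S, ∀ n : ℤ, X⟦n⟧ ∈ S) ∧
  (∀ (Tr : Triangle T), Tr ∈ (distTriang T) → Tr.obj₁ ∈ S → Tr.obj₂ ∈ S → Tr.obj₃ ∈ S) ∧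
  (∀ ⦃ι : Type v⦄ (X : ι → T), (∀ i, X i ∈ S) → (∐ X) ∈ S)

section Aux

variable {T : Type u} [Category.{v} T] [Preadditive T] [HasZeroObject T]
    [HasShift T ℤ] [∀ n : ℤ, (shiftFunctor T n).Additive] [Pretriangulated T]
    [HasCoproducts.{v} T] {L0 X : T} (f : L0 ⟶ X)

/-- transfer of bijectivity along an isomorphism -/
lemma aux_iso {A B : T} (e : A ≅ B)
    (hA : Function.Bijective (fun u : A ⟶ L0 => u ≫ f)) :
    Function.Bijective (fun u : B ⟶ L0 => u ≫ f) := by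
  constructor
  · intro u v huv
    simp only at huv
    have : (e.hom ≫ u) ≫ f = (e.hom ≫ v) ≫ f := by
      simp only [assoc, huv]
    have := hA.1 this
    calc u = e.inv ≫ e.hom ≫ u := by simp
    _ = e.inv ≫ e.hom ≫ v := by rw [this]
    _ = v := by simp
  · intro w
    obtain ⟨u, hu⟩ := hA.2 (e.hom ≫ w)
    refine ⟨e.inv ≫ u, ?_⟩
    simp only at hu ⊢
    rw [assoc, hu]
    simp

lemma aux_coprod {ι : Type v} (Y : ι → T)
    (hY : ∀ i, Function.Bijective (fun u : Y i ⟶ L0 => u ≫ f)) :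
    Function.Bijective (fun u : (∐ Y) ⟶ L0 => u ≫ f) := by
  constructor
  · intro u v huv
    apply Sigma.hom_ext
    intro i
    apply (hY i).1
    simp only
    rw [assoc, assoc]
    exact congrArg (fun t => Sigma.ι Y i ≫ t) huv
  · intro w
    have h := fun i => (hY i).2 (Sigma.ι Y i ≫ w)
    choose u hu using h
    refine ⟨Sigma.desc u, ?_⟩
    apply Sigma.hom_ext
    intro i
    simp only [← assoc, colimit.ι_desc]
    exact hu i

lemma aux_triangle (Tr : Triangle T) (hTr : Tr ∈ distTriang T)
    (h1 : Function.Bijective (fun u : Tr.obj₁ ⟶ L0 => u ≫ f))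
    (h2 : Function.Bijective (fun u : Tr.obj₂ ⟶ L0 => u ≫ f))
    (h1s : Function.Bijective (fun u : Tr.obj₁⟦(1:ℤ)⟧ ⟶ L0 => u ≫ f))
    (h2s : Function.Bijective (fun u : Tr.obj₂⟦(1:ℤ)⟧ ⟶ L0 => u ≫ f)) :
    Function.Bijective (fun u : Tr.obj₃ ⟶ L0 => u ≫ f) := by
  constructor
  · intro u₁ u₂ huv
    simp only at huv
    have hu : (u₁ - u₂) ≫ f = 0 := by rw [Preadditive.sub_comp, huv, sub_self]
    set u := u₁ - u₂ with hudef
    -- mor₂ ≫ u = 0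
    have h2u : Tr.mor₂ ≫ u = 0 := by
      apply h2.1
      simp only
      rw [assoc, hu, comp_zero, zero_comp]
    obtain ⟨s, hs⟩ := Triangle.yoneda_exact₃ Tr hTr u h2u
    -- mor₃ ≫ (s ≫ f) = 0
    have h3s : Tr.rotate.mor₂ ≫ (s ≫ f) = 0 := by
      dsimp [Triangle.rotate]
      exact (assoc Tr.mor₃ s f).symm.trans (by rw [← hs]; exact hu)
    obtain ⟨t, ht⟩ := Triangle.yoneda_exact₃ Tr.rotate (rot_of_distTriang Tr hTr) (s ≫ f) h3s
    obtain ⟨t', ht'⟩ := h2s.2 t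
    simp only at ht'
    have hsval : s = Tr.rotate.mor₃ ≫ t' := by
      apply h1s.1
      simp only
      exact ht.trans (by rw [← ht']; exact (assoc _ _ _).symm)
    have : u = 0 := by
      rw [hs, hsval]; refine (assoc _ _ _).symm.trans ?_
      have : Tr.mor₃ ≫ Tr.rotate.mor₃ = 0 := by
        dsimp [Triangle.rotate]
        exact (Preadditive.comp_neg Tr.mor₃ ((shiftFunctor T 1).map Tr.mor₁)).trans (by rw [comp_distTriang_mor_zero₃₁ Tr hTr]; exact neg_zero)
      rw [this]; exact zero_comp
    rw [← sub_eq_zero]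
    exact this
  · intro w
    -- v : obj₂ ⟶ L0 with v ≫ f = mor₂ ≫ w
    obtain ⟨v, hv⟩ := h2.2 (Tr.mor₂ ≫ w)
    simp only at hv
    -- mor₁ ≫ v = 0
    have h1v : Tr.mor₁ ≫ v = 0 := by
      apply h1.1
      simp only
      rw [assoc, hv, ← assoc, comp_distTriang_mor_zero₁₂ Tr hTr, zero_comp, zero_comp]
    obtain ⟨u, hu⟩ := Triangle.yoneda_exact₂ Tr hTr v h1v
    -- d := w - u ≫ f, mor₂ ≫ d = 0
    have hd : Tr.mor₂ ≫ (w - u ≫ f) = 0 := by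
      rw [Preadditive.comp_sub, ← assoc, ← hu, hv, sub_self]
    obtain ⟨s, hs⟩ := Triangle.yoneda_exact₃ Tr hTr _ hd
    obtain ⟨s', hs'⟩ := h1s.2 s
    simp only at hs'
    refine ⟨u + Tr.mor₃ ≫ s', ?_⟩
    simp only [Preadditive.add_comp, assoc, hs']
    rw [← hs]
    abel

end Aux

/-- Let `S` be the smallest localizing subcategory of `T` containing a class
`𝓡` of objects (closed under shifts).  If `L0 ∈ S` and `f : L0 ⟶ X` is such that
composition with `f` induces an isomorphism `Hom(R, L0) ≅ Hom(R, X)` for all `R ∈ 𝓡`,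
then composition with `f` induces an isomorphism `Hom(S', L0) ≅ Hom(S', X)` for every
object `S' ∈ S`. -/
theorem stmt2 {T : Type u} [Category.{v} T] [Preadditive T] [HasZeroObject T]
    [HasShift T ℤ] [∀ n : ℤ, (shiftFunctor T n).Additive] [Pretriangulated T]
    [HasCoproducts.{v} T]
    (𝓡 S : Set T)
    (hR_shift : ∀ R ∈ 𝓡, ∀ n : ℤ, R⟦n⟧ ∈ 𝓡)
    (hS : IsLocalizingClass T S)
    (hRS : 𝓡 ⊆ S)
    (hmin : ∀ S' : Set T, IsLocalizingClass T S' → 𝓡 ⊆ S' → S ⊆ S')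
    (L0 X : T) (hL0 : L0 ∈ S) (f : L0 ⟶ X)
    (hiso : ∀ R ∈ 𝓡, Function.Bijective (fun u : R ⟶ L0 => u ≫ f)) :
    ∀ S' ∈ S, Function.Bijective (fun u : S' ⟶ L0 => u ≫ f) := by
  set P : T → Prop := fun A => Function.Bijective (fun u : A ⟶ L0 => u ≫ f) with hP
  set S' : Set T := {A | ∀ n : ℤ, P (A⟦n⟧)} with hS'
  have hS'loc : IsLocalizingClass T S' := by
    refine ⟨?_, ?_, ?_, ?_⟩
    · intro A B e hA n
      exact aux_iso f ((shiftFunctor T n).mapIso e) (hA n)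
    · intro A hA n m
      exact aux_iso f ((shiftFunctorAdd T n m).app A) (hA (n + m))
    · intro Tr hTr h1 h2 n
      have hTrn := Triangle.shift_distinguished Tr hTr n
      have e1 : (Tr.obj₁⟦n⟧)⟦(1:ℤ)⟧ ≅ Tr.obj₁⟦n + 1⟧ :=
        ((shiftFunctorAdd T n 1).app Tr.obj₁).symm
      have e2 : (Tr.obj₂⟦n⟧)⟦(1:ℤ)⟧ ≅ Tr.obj₂⟦n + 1⟧ :=
        ((shiftFunctorAdd T n 1).app Tr.obj₂).symm
      exact aux_triangle f _ hTrn (h1 n) (h2 n)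
        (aux_iso f e1.symm (h1 (n + 1))) (aux_iso f e2.symm (h2 (n + 1)))
    · intro ι Y hY n
      have e : ∐ (fun i => (Y i)⟦n⟧) ≅ (∐ Y)⟦n⟧ :=
        (PreservesCoproduct.iso (shiftFunctor T n) Y).symm
      exact aux_iso f e (aux_coprod f _ (fun i => hY i n))
  have hRS' : 𝓡 ⊆ S' := by
    intro R hR n
    exact hiso _ (hR_shift R hR n)
  intro A hA
  have hA' : A ∈ S' := hmin S' hS'loc hRS' hA
  have h0 := hA' 0
  exact aux_iso f ((shiftFunctorZero T ℤ).app A) h0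
end

section
/- With the hypotheses and construction of the main theorem (X of finite 𝓡-dimension, L_0 the homotopy approximation), the map Hom_T(R, L_0) → Hom_T(R, X) induced by the canonical morphism L_0 → X is surjective for every R ∈ 𝓡. -/
open CategoryTheory Category Limits Pretriangulated

/-- With the hypotheses and construction of the main theorem: Let `E` be a Frobenius category with stable (triangulated)
category `T`, presented by the full additive quotient functor `Q : E ⥤ T` which kills
exactly the maps factoring through the projective-injective objects `Inj`.  Let `𝓡` be a
precovering class in `E`, closed under shifts in `T` and under injective hulls.  Let `X`
have `𝓡`-dimension `d`, with `𝓡`-resolution given by precovers `p i : R i ⟶ K i` and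
kernels `k i : K (i+1) ⟶ R i` (where `K 0 = X` and `K d ∈ 𝓡`), and let `L 0` be the
object of `T` obtained by the iterated cone construction (encoded by the distinguished
triangles `L (i+1) → Q(R i) → L i` and the comparison maps `σ i : L i ⟶ Q(K i)`).
STATEMENT 7: the natural map `Hom_T(Q R', L 0) → Hom_T(Q R', Q X)` induced by the
canonical morphism `L 0 ⟶ Q X` is surjective for every `R' ∈ 𝓡`. -/
theorem stmt7 {E : Type*} [Category E] [Preadditive E]
    {T : Type*} [Category T] [Preadditive T] [HasZeroObject T] [HasShift T ℤ]
    [∀ n : ℤ, (shiftFunctor T n).Additive] [Pretriangulated T]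
    (Q : E ⥤ T) [Q.Full] [Q.Additive]
    (Inj : Set E)
    -- a map is zero in the stable category `T` iff it factors through an injective in `E`
    (hzero : ∀ {A B : E} (f : A ⟶ B),
      Q.map f = 0 ↔ ∃ (I : E) (_ : I ∈ Inj) (u : A ⟶ I) (v : I ⟶ B), u ≫ v = f)
    (𝓡 : Set E)
    -- (i) `𝓡` is a precovering class in `E`
    (hpre : ∀ Y : E, ∃ (RY : E) (_ : RY ∈ 𝓡) (rY : RY ⟶ Y),
      ∀ R' ∈ 𝓡, ∀ f : R' ⟶ Y, ∃ g : R' ⟶ RY, g ≫ rY = f)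
    -- (ii) `𝓡` is closed under shifts in `T`
    (hshift : ∀ R' ∈ 𝓡, ∀ n : ℤ, ∃ R'' ∈ 𝓡, Nonempty (Q.obj R'' ≅ (Q.obj R')⟦n⟧))
    -- (iii) `𝓡` is closed under injective hulls
    (hhull : ∀ R' ∈ 𝓡, ∃ (I : E) (_ : I ∈ Inj) (_ : I ∈ 𝓡) (ι : R' ⟶ I), Mono ι)
    -- the `𝓡`-resolution of `X`, of length `d`
    (X : E) (d : ℕ) (K : ℕ → E) (hK0 : K 0 = X)
    (R : ℕ → E) (hRmem : ∀ i, R i ∈ 𝓡)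
    (p : ∀ i, R i ⟶ K i)
    (hp : ∀ i, ∀ R' ∈ 𝓡, ∀ f : R' ⟶ K i, ∃ g : R' ⟶ R i, g ≫ p i = f)
    (k : ∀ i, K (i + 1) ⟶ R i)
    (hk : ∀ i, k i ≫ p i = 0)
    (hker : ∀ i, ∀ ⦃Z : E⦄ (u : Z ⟶ R i), u ≫ p i = 0 → ∃! v : Z ⟶ K (i + 1), v ≫ k i = u)
    -- `X` has `𝓡`-dimension exactly `d`
    (hKd : K d ∈ 𝓡) (hmin : ∀ i < d, K i ∉ 𝓡)
    -- the homotopy approximation `L` with comparison maps `σ`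
    (L : ℕ → T) (hLd : L d = Q.obj (K d))
    (σ : ∀ i, L i ⟶ Q.obj (K i)) (hσd : σ d = eqToHom (by rw [hLd]))
    (g : ∀ i, Q.obj (R i) ⟶ L i) (h : ∀ i, L i ⟶ (L (i + 1))⟦(1 : ℤ)⟧)
    (hdist : ∀ i < d, Triangle.mk (σ (i + 1) ≫ Q.map (k i)) (g i) (h i) ∈ (distTriang T))
    (hcomm : ∀ i < d, g i ≫ σ i = Q.map (p i)) :
    ∀ R' ∈ 𝓡,
      Function.Surjective
        (fun u : Q.obj R' ⟶ L 0 => u ≫ σ 0 ≫ eqToHom (by rw [hK0] : Q.obj (K 0) = Q.obj X)) := by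
  intro R' hR' f
  rcases Nat.eq_zero_or_pos d with hd | hd
  · subst hd
    refine ⟨f ≫ eqToHom (by rw [hK0] : Q.obj X = Q.obj (K 0)) ≫ eqToHom hLd.symm, ?_⟩
    simp [hσd]
  · -- f lifts to E since Q is full
    obtain ⟨f', hf'⟩ := Q.map_surjective
      (f ≫ eqToHom (by rw [hK0] : Q.obj X = Q.obj (K 0)))
    obtain ⟨g', hg'⟩ := hp 0 R' hR' f'
    refine ⟨Q.map g' ≫ g 0, ?_⟩
    have := hcomm 0 hd
    show (Q.map g' ≫ g 0) ≫ σ 0 ≫ _ = f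
    rw [← Category.assoc, Category.assoc (Q.map g'), this, ← Q.map_comp, hg', hf']
    simp
end
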